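/- arXiv:1103.2717 — 2 statements merged into one kernel-verified Lean document; each statement's English description precedes it below -/
import Mathlib

section
/- For fixed k the two measures agree on almost all entry-specification events: For every fixed k ≥ 1 there exists a constant C > 0 such that for all n ≥ 2, n² · |F(k,n)| ≤ C · 3^k · C((n−1)², k), where F(k,n) is the set of pairs (I,B) with I ⊆ {1,…,n−1}², |I| = k, B : I → {−1,0,+1}, and P_chio[E_B^{[n−1]²}] ≠ P_lcf[E_B^{[n−1]²}], and C((n−1)², k) is the binomial coefficient counting the k-element subsets of {1,…,n−1}². (Equivalently, the proportion of failing pairs among all 3^k·C((n−1)²,k) pairs is O(n^{−2}) as n → ∞.) -/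
/-- The grid of index positions `{1,…,s-1} × {1,…,t-1}`. -/
def mgrid (s t : ℕ) : Finset (ℕ × ℕ) := Finset.Icc 1 (s - 1) ×ˢ Finset.Icc 1 (t - 1)

/-- The Chio extension `J̆` of a set `J` of positions:
`J̆ = {(s,t)} ∪ {(i,t) : i ∈ p1(J)} ∪ {(s,j) : j ∈ p2(J)} ∪ J`. -/
def chioExt (s t : ℕ) (J : Finset (ℕ × ℕ)) : Finset (ℕ × ℕ) :=
  insert (s, t) (((J.image Prod.fst).image fun i => (i, t)) ∪
    ((J.image Prod.snd).image fun j => (s, j)) ∪ J)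

/-- `A` condenses to `B` on `I`:
`A(i,j)·A(s,t) − A(i,t)·A(s,j) = 2·B(i,j)` for every `(i,j) ∈ I`. -/
def CondensesTo (s t : ℕ) (I : Finset (ℕ × ℕ)) (A B : ℕ × ℕ → ℤ) : Prop :=
  ∀ p ∈ I, A p * A (s, t) - A (p.1, t) * A (s, p.2) = 2 * B p

/-- `A` encodes a function `E → {−1,+1}`: it takes values `±1` on `E` and is
normalized to `1` off `E`. -/
def IsSignOn (E : Finset (ℕ × ℕ)) (A : ℕ × ℕ → ℤ) : Prop :=
  (∀ p ∈ E, A p = 1 ∨ A p = -1) ∧ ∀ p ∉ E, A p = 1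

/-- First projection `p1(I)` of a set of positions. -/
def proj1 (I : Finset (ℕ × ℕ)) : Finset ℕ := I.image Prod.fst

/-- Second projection `p2(I)` of a set of positions. -/
def proj2 (I : Finset (ℕ × ℕ)) : Finset ℕ := I.image Prod.snd

/-- The vertex set of the bipartite graph `X_B`: a copy `Sum.inl i` of each row index
`i ∈ p1(I)` and a copy `Sum.inr j` of each column index `j ∈ p2(I)`. -/
def vertSet (I : Finset (ℕ × ℕ)) : Finset (ℕ ⊕ ℕ) :=
  (proj1 I).image Sum.inl ∪ (proj2 I).image Sum.inr

/-- `f0(X_B) = |p1(I)| + |p2(I)|`, the number of vertices of `X_B`. -/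
def fZero (I : Finset (ℕ × ℕ)) : ℕ := (proj1 I).card + (proj2 I).card

/-- The full grid `{1,…,n} × {1,…,n}` (the domain of the uncondensed sign matrices). -/
def fullGrid (n : ℕ) : Finset (ℕ × ℕ) := Finset.Icc 1 n ×ˢ Finset.Icc 1 n

/-- `P_chio[E_B^{[n−1]²}] = 2^{−n²} · |{A : {1,…,n}² → {±1} : A condenses to B}|`. -/
noncomputable def PchioN (n : ℕ) (I : Finset (ℕ × ℕ)) (B : ℕ × ℕ → ℤ) : ℚ :=
  (Set.ncard {A : ℕ × ℕ → ℤ | IsSignOn (fullGrid n) A ∧ CondensesTo n n I A B} : ℚ) /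
    2 ^ (n ^ 2)

/-- `P_lcf[E_B^{[n−1]²}] = (1/2)^{|I| + |Supp(B)|}` where `Supp(B) = {p ∈ I : B p ≠ 0}`. -/
def PlcfN (I : Finset (ℕ × ℕ)) (B : ℕ × ℕ → ℤ) : ℚ :=
  (1 / 2 : ℚ) ^ (I.card + (I.filter fun p => B p ≠ 0).card)

/-- The failure set `F(k,n)`: pairs `(I,B)` with `I ⊆ {1,…,n-1}²`, `|I| = k`,
`B : I → {−1,0,+1}` (normalized to `0` off `I`), and
`P_chio[E_B^{[n−1]²}] ≠ P_lcf[E_B^{[n−1]²}]`. -/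
def FailSet (n k : ℕ) : Set (Finset (ℕ × ℕ) × ((ℕ × ℕ) → ℤ)) :=
  {IB | IB.1 ⊆ mgrid n n ∧ IB.1.card = k ∧
    (∀ p ∈ IB.1, IB.2 p = -1 ∨ IB.2 p = 0 ∨ IB.2 p = 1) ∧ (∀ p ∉ IB.1, IB.2 p = 0) ∧
    PchioN n IB.1 IB.2 ≠ PlcfN IB.1 IB.2}

open scoped Classical

noncomputable def dmap (n : ℕ) (S : Finset (ℕ × ℕ)) (p : ℕ × ℕ) : ℕ × ℕ :=
  if ∀ q ∈ S, q.2 = p.2 → q = p then (n, p.2) else (p.1, n)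

noncomputable def omap (n : ℕ) (S : Finset (ℕ × ℕ)) (p : ℕ × ℕ) : ℕ × ℕ :=
  if ∀ q ∈ S, q.2 = p.2 → q = p then (p.1, n) else (n, p.2)

noncomputable def abord (n : ℕ) (S : Finset (ℕ × ℕ)) (B f : ℕ × ℕ → ℤ) (q : ℕ × ℕ) : ℤ :=
  if h : ∃! a, a ∈ S ∧ dmap n S a = q then
    -(B h.exists.choose) * f (omap n S h.exists.choose) else f q

noncomputable def phi (n : ℕ) (I S : Finset (ℕ × ℕ)) (B f : ℕ × ℕ → ℤ) : ℕ × ℕ → ℤ :=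
  fun q => if q ∈ I then
    (2 * B q + abord n S B f (q.1, n) * abord n S B f (n, q.2)) * f (n, n)
  else abord n S B f q

lemma abord_notD {n : ℕ} {S : Finset (ℕ × ℕ)} {B f : ℕ × ℕ → ℤ} {q : ℕ × ℕ}
    (hq : ∀ a ∈ S, dmap n S a ≠ q) : abord n S B f q = f q := by
  rw [abord, dif_neg]
  rintro ⟨a, ⟨ha, hda⟩, -⟩
  exact hq a ha hda

lemma abord_D {n : ℕ} {S : Finset (ℕ × ℕ)} {B f : ℕ × ℕ → ℤ} {p : ℕ × ℕ}
    (hdinj : Set.InjOn (dmap n S) S) (hp : p ∈ S) :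
    abord n S B f (dmap n S p) = -(B p) * f (omap n S p) := by
  have hEU : ∃! a, a ∈ S ∧ dmap n S a = dmap n S p :=
    ⟨p, ⟨hp, rfl⟩, by rintro a ⟨ha, hda⟩; exact hdinj ha hp hda⟩
  rw [abord, dif_pos hEU]
  have h1 := hEU.exists.choose_spec
  have h2 : hEU.exists.choose = p := hdinj h1.1 hp h1.2
  rw [h2]

lemma pm_mul {a b : ℤ} (ha : a = 1 ∨ a = -1) (hb : b = 1 ∨ b = -1) :
    a * b = 1 ∨ a * b = -1 := by
  rcases ha with rfl | rfl <;> rcases hb with rfl | rfl <;> norm_num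

lemma ncard_signOn (E : Finset (ℕ × ℕ)) :
    Set.ncard {f : ℕ × ℕ → ℤ | IsSignOn E f} = 2 ^ E.card := by
  have hset : {f : ℕ × ℕ → ℤ | IsSignOn E f} =
      ↑(E.powerset.image (fun P => fun p => if p ∈ P then (-1 : ℤ) else 1)) := by
    ext f
    simp only [Set.mem_setOf_eq, Finset.coe_image, Set.mem_image, Finset.mem_coe,
      Finset.mem_powerset]
    constructor
    · rintro ⟨h1, h2⟩
      refine ⟨E.filter (fun p => f p = -1), Finset.filter_subset _ _, ?_⟩
      funext p
      by_cases hp : p ∈ E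
      · rcases h1 p hp with h | h
        · simp [Finset.mem_filter, hp, h]
        · simp [Finset.mem_filter, hp, h]
      · simp [Finset.mem_filter, hp, h2 p hp]
    · rintro ⟨P, hP, rfl⟩
      constructor
      · intro p hp; by_cases h : p ∈ P <;> simp [h]
      · intro p hp
        have : p ∉ P := fun h => hp (hP h)
        simp [this]
  rw [hset, Set.ncard_coe_finset, Finset.card_image_of_injOn, Finset.card_powerset]
  intro P hP Q hQ hfg
  simp only [Finset.mem_coe, Finset.mem_powerset] at hP hQ
  ext p
  constructor
  · intro hp
    have := congrFun hfg p
    simp [hp] at this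
    by_contra hq
    simp [hq] at this
  · intro hp
    have := congrFun hfg p
    simp [hp] at this
    by_contra hq
    simp [hq] at this

lemma chio_eq_lcf (n : ℕ) (hn : 2 ≤ n) (I : Finset (ℕ × ℕ)) (B : ℕ × ℕ → ℤ)
    (hI : I ⊆ mgrid n n) (hBval : ∀ p ∈ I, B p = -1 ∨ B p = 0 ∨ B p = 1)
    (hNC : ∀ p ∈ I.filter (fun p => B p ≠ 0),
      (∀ q ∈ I.filter (fun p => B p ≠ 0), q.2 = p.2 → q = p) ∨
      (∀ q ∈ I.filter (fun p => B p ≠ 0), q.1 = p.1 → q = p)) :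
    PchioN n I B = PlcfN I B := by
  classical
  set S : Finset (ℕ × ℕ) := I.filter (fun p => B p ≠ 0) with hSdef
  -- coordinates of members of I
  have hco : ∀ p ∈ I, 1 ≤ p.1 ∧ p.1 ≤ n - 1 ∧ 1 ≤ p.2 ∧ p.2 ≤ n - 1 := by
    intro p hp
    have := hI hp
    simp only [mgrid, Finset.mem_product, Finset.mem_Icc] at this
    exact ⟨this.1.1, this.1.2, this.2.1, this.2.2⟩
  have hSI : S ⊆ I := Finset.filter_subset _ _
  have hBS : ∀ p ∈ S, B p = 1 ∨ B p = -1 := by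
    intro p hp
    rw [hSdef, Finset.mem_filter] at hp
    rcases hBval p hp.1 with h | h | h
    · exact Or.inr h
    · exact absurd h hp.2
    · exact Or.inl h
  have hIgrid : ∀ p ∈ I, p ∈ fullGrid n := by
    intro p hp
    have := hco p hp
    simp only [fullGrid, Finset.mem_product, Finset.mem_Icc]
    omega
  have hInotn : ∀ p ∈ I, p.1 ≠ n ∧ p.2 ≠ n := by
    intro p hp; have := hco p hp; omega
  -- injectivity of dmap on S
  have hdinj : Set.InjOn (dmap n S) S := by
    intro p hp p' hp' h
    have hcp := hco p (hSI hp)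
    have hcp' := hco p' (hSI hp')
    by_cases c : ∀ q ∈ S, q.2 = p.2 → q = p <;>
      by_cases c' : ∀ q ∈ S, q.2 = p'.2 → q = p'
    · rw [dmap, dmap, if_pos c, if_pos c', Prod.ext_iff] at h
      exact c' p hp h.2
    · rw [dmap, dmap, if_pos c, if_neg c', Prod.ext_iff] at h
      simp only at h
      omega
    · rw [dmap, dmap, if_neg c, if_pos c', Prod.ext_iff] at h
      simp only at h
      omega
    · rw [dmap, dmap, if_neg c, if_neg c', Prod.ext_iff] at h
      simp only at h
      rcases hNC p hp with hcol | hrow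
      · exact absurd hcol c
      · exact (hrow p' hp' h.1.symm).symm
  set D : Finset (ℕ × ℕ) := S.image (dmap n S) with hDdef
  have hDcases : ∀ q ∈ D, ∃ p ∈ S, dmap n S p = q := by
    intro q hq; rw [hDdef, Finset.mem_image] at hq; exact hq
  have hdform : ∀ p ∈ S, dmap n S p = (n, p.2) ∨ dmap n S p = (p.1, n) := by
    intro p hp; rw [dmap]; split <;> simp
  have hDnotI : ∀ q ∈ D, q ∉ I := by
    intro q hq hqI
    obtain ⟨p, hp, rfl⟩ := hDcases q hq
    have hcq := hco _ hqI
    have hcp := hco p (hSI hp)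
    rcases hdform p hp with h | h <;> rw [h] at hcq <;> simp at hcq <;> omega
  have hDgrid : ∀ q ∈ D, q ∈ fullGrid n := by
    intro q hq
    obtain ⟨p, hp, rfl⟩ := hDcases q hq
    have hcp := hco p (hSI hp)
    rcases hdform p hp with h | h <;> rw [h] <;>
      simp only [fullGrid, Finset.mem_product, Finset.mem_Icc] <;> omega
  have hoform : ∀ p ∈ S, (∀ q ∈ S, q.2 = p.2 → q = p) ∧ omap n S p = (p.1, n) ∧ dmap n S p = (n, p.2) ∨
      (¬ ∀ q ∈ S, q.2 = p.2 → q = p) ∧ omap n S p = (n, p.2) ∧ dmap n S p = (p.1, n) := by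
    intro p hp
    by_cases c : ∀ q ∈ S, q.2 = p.2 → q = p
    · exact Or.inl ⟨c, by rw [omap, if_pos c], by rw [dmap, if_pos c]⟩
    · exact Or.inr ⟨c, by rw [omap, if_neg c], by rw [dmap, if_neg c]⟩
  -- o p is not in D
  have honotD : ∀ p ∈ S, omap n S p ∉ D := by
    intro p hp hmem
    obtain ⟨p', hp', hdp'⟩ := hDcases _ hmem
    have hcp := hco p (hSI hp)
    have hcp' := hco p' (hSI hp')
    rcases hoform p hp with ⟨c, ho, -⟩ | ⟨c, ho, -⟩ <;> rw [ho] at hdp' <;>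
      rcases hoform p' hp' with ⟨c', -, hd'⟩ | ⟨c', -, hd'⟩ <;> rw [hd'] at hdp' <;>
      rw [Prod.ext_iff] at hdp' <;> simp at hdp'
    · omega
    · -- c : colU p, c' false: p'.1 = p.1, n = n
      -- p' ≠ p since c' fails but c holds... derive corner at p'
      have hne : p' ≠ p := by
        rintro rfl; exact c' c
      rcases hNC p' hp' with hcol | hrow
      · exact c' hcol
      · have := hrow p hp (by omega)
        exact hne (this ▸ rfl) |>.elim
    · -- ¬colU p, colU p': (n, p.2) = (n, p'.2) so p'.2 = p.2, c' gives p = p', contra c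
      have : p = p' := c' p hp (by omega)
      rw [this] at c
      exact c c'
    · omega
  have honotI : ∀ p ∈ S, omap n S p ∉ I := by
    intro p hp hmem
    have hcq := hco _ hmem
    rcases hoform p hp with ⟨-, ho, -⟩ | ⟨-, ho, -⟩ <;> rw [ho] at hcq <;> simp at hcq <;> omega
  have hogrid : ∀ p ∈ S, omap n S p ∈ fullGrid n := by
    intro p hp
    have hcp := hco p (hSI hp)
    rcases hoform p hp with ⟨-, ho, -⟩ | ⟨-, ho, -⟩ <;> rw [ho] <;>
      simp only [fullGrid, Finset.mem_product, Finset.mem_Icc] <;> omega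
  set Free : Finset (ℕ × ℕ) := fullGrid n \ (I ∪ D) with hFdef
  have honF : ∀ p ∈ S, omap n S p ∈ Free := by
    intro p hp
    rw [hFdef, Finset.mem_sdiff, Finset.mem_union]
    exact ⟨hogrid p hp, fun h => h.elim (honotI p hp) (honotD p hp)⟩
  have hnnD : ((n : ℕ), (n : ℕ)) ∉ D := by
    intro h
    obtain ⟨p, hp, hdp⟩ := hDcases _ h
    have hcp := hco p (hSI hp)
    rcases hdform p hp with h' | h' <;> rw [h'] at hdp <;>
      rw [Prod.ext_iff] at hdp <;> simp at hdp <;> omega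
  have hnnI : ((n : ℕ), (n : ℕ)) ∉ I := by
    intro h; have := hco _ h; simp at this; omega
  have hnnF : ((n : ℕ), (n : ℕ)) ∈ Free := by
    rw [hFdef, Finset.mem_sdiff, Finset.mem_union]
    refine ⟨?_, fun h => h.elim hnnI hnnD⟩
    simp only [fullGrid, Finset.mem_product, Finset.mem_Icc]
    omega
  -- border cells of members of I are not in I
  have hbordI : ∀ (p : ℕ × ℕ), p ∈ I → ((p.1, n) ∉ I ∧ ((n : ℕ), p.2) ∉ I) := by
    intro p hp
    constructor
    · intro h; have := hco _ h; simp at this; omega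
    · intro h; have := hco _ h; simp at this; omega
  -- abord at cells not in D equals f
  have habF : ∀ (f : ℕ × ℕ → ℤ) (q : ℕ × ℕ), q ∉ D → abord n S B f q = f q := by
    intro f q hq
    apply abord_notD
    intro a ha hda
    exact hq (hda ▸ Finset.mem_image_of_mem _ ha)
  have hFgrid : Free ⊆ fullGrid n := Finset.sdiff_subset
  -- the product of the two border values at a support cell
  have hxy : ∀ (f : ℕ × ℕ → ℤ), IsSignOn Free f → ∀ p ∈ S,
      abord n S B f (p.1, n) * abord n S B f (n, p.2) = -(B p) := by
    intro f hf p hp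
    have habD := abord_D (B := B) (f := f) hdinj hp
    rcases hoform p hp with ⟨c, ho, hd⟩ | ⟨c, ho, hd⟩
    · rw [hd, ho] at habD
      have h2 : abord n S B f (p.1, n) = f (p.1, n) := habF f _ (ho ▸ honotD p hp)
      have hfin : f (p.1, n) = 1 ∨ f (p.1, n) = -1 := hf.1 _ (ho ▸ honF p hp)
      rw [habD, h2]
      rcases hfin with h | h <;> rw [h] <;> ring
    · rw [hd, ho] at habD
      have h2 : abord n S B f ((n : ℕ), p.2) = f ((n : ℕ), p.2) := habF f _ (ho ▸ honotD p hp)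
      have hfin : f ((n : ℕ), p.2) = 1 ∨ f ((n : ℕ), p.2) = -1 := hf.1 _ (ho ▸ honF p hp)
      rw [habD, h2]
      rcases hfin with h | h <;> rw [h] <;> ring
  -- abord takes values ±1 at grid cells off I
  have habm : ∀ (f : ℕ × ℕ → ℤ), IsSignOn Free f → ∀ q ∈ fullGrid n, q ∉ I →
      (abord n S B f q = 1 ∨ abord n S B f q = -1) := by
    intro f hf q hqg hqI
    by_cases hqD : q ∈ D
    · obtain ⟨p, hp, rfl⟩ := hDcases q hqD
      rw [abord_D hdinj hp]
      apply pm_mul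
      · rcases hBS p hp with h | h <;> rw [h] <;> norm_num
      · exact hf.1 _ (honF p hp)
    · rw [habF f q hqD]
      exact hf.1 q (Finset.mem_sdiff.mpr ⟨hqg, by
        rw [Finset.mem_union]; tauto⟩)
  have hbordgrid : ∀ p ∈ I, (p.1, (n : ℕ)) ∈ fullGrid n ∧ ((n : ℕ), p.2) ∈ fullGrid n := by
    intro p hp
    have := hco p hp
    constructor <;> simp only [fullGrid, Finset.mem_product, Finset.mem_Icc] <;> omega
  have hnngrid : ((n : ℕ), (n : ℕ)) ∈ fullGrid n := by
    simp only [fullGrid, Finset.mem_product, Finset.mem_Icc]; omega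
  -- phi maps sign functions on Free into the solution set
  have hphiT : ∀ (f : ℕ × ℕ → ℤ), IsSignOn Free f →
      IsSignOn (fullGrid n) (phi n I S B f) ∧ CondensesTo n n I (phi n I S B f) B := by
    intro f hf
    have hfnn : f ((n : ℕ), (n : ℕ)) = 1 ∨ f ((n : ℕ), (n : ℕ)) = -1 := hf.1 _ hnnF
    refine ⟨⟨?_, ?_⟩, ?_⟩
    · intro q hq
      rw [phi]
      by_cases hqI : q ∈ I
      · rw [if_pos hqI]
        have hx := habm f hf (q.1, n) (hbordgrid q hqI).1 (hbordI q hqI).1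
        have hy := habm f hf ((n : ℕ), q.2) (hbordgrid q hqI).2 (hbordI q hqI).2
        by_cases hq0 : B q = 0
        · rw [hq0]
          have := pm_mul (pm_mul hx hy) hfnn
          rcases this with h | h <;> [left; right] <;> rw [← h] <;> ring
        · have hqS : q ∈ S := Finset.mem_filter.mpr ⟨hqI, hq0⟩
          rw [hxy f hf q hqS]
          rcases hBS q hqS with h | h <;> rw [h] <;>
            rcases hfnn with h' | h' <;> rw [h'] <;> norm_num
      · rw [if_neg hqI]
        exact habm f hf q hq hqI
    · intro q hq
      have hqI : q ∉ I := fun h => hq (hIgrid _ h)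
      have hqD : q ∉ D := fun h => hq (hDgrid _ h)
      rw [phi]
      simp only [if_neg hqI]
      rw [habF f q hqD]
      exact hf.2 q (fun h => hq (hFgrid h))
    · intro p hp
      have h1 : phi n I S B f p =
          (2 * B p + abord n S B f (p.1, n) * abord n S B f (n, p.2)) * f (n, n) := by
        rw [phi]; simp only [if_pos hp]
      have h2 : phi n I S B f ((n : ℕ), (n : ℕ)) = f ((n : ℕ), (n : ℕ)) := by
        rw [phi]; simp only [if_neg hnnI]; exact habF f _ hnnD
      have h3 : phi n I S B f (p.1, (n : ℕ)) = abord n S B f (p.1, n) := by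
        rw [phi]; simp only [if_neg (hbordI p hp).1]
      have h4 : phi n I S B f ((n : ℕ), p.2) = abord n S B f (n, p.2) := by
        rw [phi]; simp only [if_neg (hbordI p hp).2]
      rw [h1, h2, h3, h4]
      rcases hf.1 _ hnnF with h | h <;> rw [h] <;> ring
  -- injectivity of phi on sign functions on Free
  have hinj : Set.InjOn (fun f => phi n I S B f) {f | IsSignOn Free f} := by
    intro f hf g hg h
    funext q
    by_cases hqF : q ∈ Free
    · have hq' := Finset.mem_sdiff.mp hqF
      have hqI : q ∉ I := fun h' => hq'.2 (Finset.mem_union_left _ h')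
      have hqD : q ∉ D := fun h' => hq'.2 (Finset.mem_union_right _ h')
      have := congrFun h q
      simp only [phi, if_neg hqI] at this
      rwa [habF f q hqD, habF g q hqD] at this
    · rw [hf.2 q hqF, hg.2 q hqF]
  -- surjectivity onto the solution set
  have hsurj : {A : ℕ × ℕ → ℤ | IsSignOn (fullGrid n) A ∧ CondensesTo n n I A B} ⊆
      (fun f => phi n I S B f) '' {f | IsSignOn Free f} := by
    rintro A ⟨hAsign, hAcond⟩
    set f : ℕ × ℕ → ℤ := fun q => if q ∈ Free then A q else 1 with hfdef
    have hfT : IsSignOn Free f := by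
      constructor
      · intro p hp
        rw [hfdef]
        simp only [if_pos hp]
        exact hAsign.1 p (hFgrid hp)
      · intro p hp
        rw [hfdef]
        simp only [if_neg hp]
    have hApm := hAsign.1
    have hv : ∀ p ∈ S, A (p.1, (n : ℕ)) * A ((n : ℕ), p.2) = -(B p) := by
      intro p hp
      have hcond := hAcond p (hSI hp)
      have hbg := hbordgrid p (hSI hp)
      have hu := pm_mul (hApm p (hIgrid p (hSI hp))) (hApm _ hnngrid)
      have hw := pm_mul (hApm _ hbg.1) (hApm _ hbg.2)
      rcases hBS p hp with hB | hB <;> rcases hu with h | h <;> rcases hw with h' | h' <;>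
        rw [hB] at hcond ⊢ <;> rw [h, h'] at hcond <;> rw [h'] <;> omega
    have hAb : ∀ q, q ∈ fullGrid n → q ∉ I → abord n S B f q = A q := by
      intro q hqg hqI
      by_cases hqD : q ∈ D
      · obtain ⟨p, hp, rfl⟩ := hDcases q hqD
        rw [abord_D hdinj hp]
        have hfo : f (omap n S p) = A (omap n S p) := by
          rw [hfdef]; simp only [if_pos (honF p hp)]
        have hvp := hv p hp
        have hbg := hbordgrid p (hSI hp)
        rcases hoform p hp with ⟨c, ho, hd⟩ | ⟨c, ho, hd⟩
        · rw [hfo, ho, hd]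
          rcases hApm _ hbg.1 with h | h <;> rw [h] at hvp ⊢ <;> omega
        · rw [hfo, ho, hd]
          rcases hApm _ hbg.2 with h | h <;> rw [h] at hvp ⊢ <;> omega
      · rw [habF f q hqD]
        have hqF : q ∈ Free := Finset.mem_sdiff.mpr ⟨hqg, by
          rw [Finset.mem_union]; tauto⟩
        rw [hfdef]; simp only [if_pos hqF]
    refine ⟨f, hfT, ?_⟩
    funext q
    by_cases hqI : q ∈ I
    · simp only [phi, if_pos hqI]
      have hbg := hbordgrid q hqI
      rw [hAb _ hbg.1 (hbordI q hqI).1, hAb _ hbg.2 (hbordI q hqI).2]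
      have hfnn : f ((n : ℕ), (n : ℕ)) = A ((n : ℕ), (n : ℕ)) := by
        rw [hfdef]; simp only [if_pos hnnF]
      rw [hfnn]
      have hcond := hAcond q hqI
      rcases hApm _ hnngrid with h | h <;> rw [h] at hcond ⊢ <;> linarith
    · simp only [phi, if_neg hqI]
      by_cases hqg : q ∈ fullGrid n
      · exact hAb q hqg hqI
      · have hqD : q ∉ D := fun h => hqg (hDgrid _ h)
        rw [habF f q hqD]
        have hqF : q ∉ Free := fun h => hqg (hFgrid h)
        rw [hfdef]
        simp only [if_neg hqF]
        exact (hAsign.2 q hqg).symm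
  -- the solution set is the image of sign functions on Free
  have hSolEq : {A : ℕ × ℕ → ℤ | IsSignOn (fullGrid n) A ∧ CondensesTo n n I A B} =
      (fun f => phi n I S B f) '' {f | IsSignOn Free f} := by
    apply Set.Subset.antisymm hsurj
    rintro A ⟨f, hf, rfl⟩
    exact hphiT f hf
  -- cardinalities
  have hgridcard : (fullGrid n).card = n ^ 2 := by
    rw [fullGrid, Finset.card_product, Nat.card_Icc]
    simp [sq]
  have hUsub : I ∪ D ⊆ fullGrid n := by
    intro q hq
    rcases Finset.mem_union.mp hq with h | h
    · exact hIgrid q h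
    · exact hDgrid q h
  have hdisj : Disjoint I D := by
    rw [Finset.disjoint_right]
    intro q hq
    exact hDnotI q hq
  have hDcard : D.card = S.card := Finset.card_image_of_injOn hdinj
  have hUcard : (I ∪ D).card = I.card + S.card := by
    rw [Finset.card_union_of_disjoint hdisj, hDcard]
  have hle : I.card + S.card ≤ n ^ 2 := by
    rw [← hUcard, ← hgridcard]
    exact Finset.card_le_card hUsub
  have hFcard : Free.card = n ^ 2 - (I.card + S.card) := by
    rw [hFdef, Finset.card_sdiff_of_subset hUsub, hUcard, hgridcard]
  have hncard : Set.ncard {A : ℕ × ℕ → ℤ | IsSignOn (fullGrid n) A ∧ CondensesTo n n I A B} =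
      2 ^ (n ^ 2 - (I.card + S.card)) := by
    rw [hSolEq, Set.ncard_image_of_injOn hinj, ncard_signOn, hFcard]
  rw [PchioN, PlcfN, hncard, ← hSdef]
  have h2 : ((2 : ℚ)) ^ (n ^ 2) ≠ 0 := by positivity
  have key : ((2 : ℚ)) ^ (n ^ 2 - (I.card + S.card)) * 2 ^ (I.card + S.card) = 2 ^ (n ^ 2) := by
    rw [← pow_add]
    congr 1
    omega
  push_cast
  rw [div_eq_iff h2, one_div, inv_pow, ← key]
  field_simp


/-- A "corner" in `J`: three distinct cells `p, q, r` with `q` in the same column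
as `p` and `r` in the same row as `p`. -/
def HasCorner (J : Finset (ℕ × ℕ)) : Prop :=
  ∃ t : (ℕ × ℕ) × (ℕ × ℕ) × (ℕ × ℕ), t.1 ∈ J ∧ t.2.1 ∈ J ∧ t.2.2 ∈ J ∧
    t.2.1.2 = t.1.2 ∧ t.2.1 ≠ t.1 ∧ t.2.2.1 = t.1.1 ∧ t.2.2 ≠ t.1

lemma fail_hasCorner {n k : ℕ} (hn : 2 ≤ n) {IB : Finset (ℕ × ℕ) × ((ℕ × ℕ) → ℤ)}
    (h : IB ∈ FailSet n k) : HasCorner IB.1 := by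
  obtain ⟨hI, hcard, hBval, hB0, hne⟩ := h
  set S : Finset (ℕ × ℕ) := IB.1.filter (fun p => IB.2 p ≠ 0) with hSdef
  by_cases hC : HasCorner S
  · obtain ⟨t, ht1, ht2, ht3, h4, h5, h6, h7⟩ := hC
    have hSI : S ⊆ IB.1 := Finset.filter_subset _ _
    exact ⟨t, hSI ht1, hSI ht2, hSI ht3, h4, h5, h6, h7⟩
  · exfalso
    apply hne
    apply chio_eq_lcf n hn IB.1 IB.2 hI hBval
    intro p hp
    by_contra hcon
    push_neg at hcon
    obtain ⟨⟨q, hq, hq2, hqne⟩, ⟨r, hr, hr1, hrne⟩⟩ := hcon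
    exact hC ⟨(p, q, r), hp, hq, hr, hq2, hqne, hr1, hrne⟩

lemma hasCorner_card {J : Finset (ℕ × ℕ)} (h : HasCorner J) : 3 ≤ J.card := by
  obtain ⟨t, hp, hq, hr, h4, h5, h6, h7⟩ := h
  set p := t.1 with hpd
  set q := t.2.1 with hqd
  set r := t.2.2 with hrd
  have hqr : q ≠ r := by
    intro hqr
    apply h5
    have h1 : q.1 = p.1 := by rw [hqr]; exact h6
    exact Prod.ext h1 h4
  have hsub : {p, q, r} ⊆ J := by
    intro x hx
    simp only [Finset.mem_insert, Finset.mem_singleton] at hx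
    rcases hx with rfl | rfl | rfl <;> assumption
  have h3 : ({p, q, r} : Finset (ℕ × ℕ)).card = 3 := by
    rw [Finset.card_insert_of_notMem, Finset.card_insert_of_notMem, Finset.card_singleton]
    · simp [hqr]
    · simp only [Finset.mem_insert, Finset.mem_singleton]
      push_neg
      exact ⟨fun h => h5 h.symm, fun h => h7 h.symm⟩
  calc 3 = ({p, q, r} : Finset (ℕ × ℕ)).card := h3.symm
    _ ≤ J.card := Finset.card_le_card hsub

noncomputable def cornerIs (n k : ℕ) : Finset (Finset (ℕ × ℕ)) :=
  ((mgrid n n).powersetCard k).filter HasCorner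

lemma cornerIs_card_le (n k : ℕ) :
    (cornerIs n k).card ≤ (n - 1) ^ 4 * Nat.choose ((n - 1) ^ 2) (k - 3) := by
  classical
  set Tgt : Finset (((ℕ × ℕ) × ℕ × ℕ) × Finset (ℕ × ℕ)) :=
    (mgrid n n ×ˢ (Finset.Icc 1 (n - 1) ×ˢ Finset.Icc 1 (n - 1))) ×ˢ
      (mgrid n n).powersetCard (k - 3) with hT
  have hm : (mgrid n n).card = (n - 1) ^ 2 := by
    rw [mgrid, Finset.card_product, Nat.card_Icc]
    simp [sq]
  have hTcard : Tgt.card = (n - 1) ^ 4 * Nat.choose ((n - 1) ^ 2) (k - 3) := by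
    rw [hT, Finset.card_product, Finset.card_product, Finset.card_product,
      Finset.card_powersetCard, hm, Nat.card_Icc]
    simp only [Nat.add_sub_cancel]
    ring
  rw [← hTcard]
  apply Finset.card_le_card_of_injOn
    (fun I => if h : HasCorner I then
      ((h.choose.1, (h.choose.2.1.1, h.choose.2.2.2)), I \ {h.choose.1, h.choose.2.1, h.choose.2.2})
      else (((0, 0), 0, 0), ∅))
  · intro I hI
    rw [cornerIs, Finset.coe_filter, Set.mem_setOf_eq, Finset.mem_powersetCard] at hI
    obtain ⟨⟨hIsub, hIcard⟩, hC⟩ := hI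
    simp only [dif_pos hC]
    obtain ⟨hp, hq, hr, h4, h5, h6, h7⟩ := hC.choose_spec
    set p := hC.choose.1 with hpd
    set q := hC.choose.2.1 with hqd
    set r := hC.choose.2.2 with hrd
    have hqr : q ≠ r := by
      intro hqr
      apply h5
      have h1 : q.1 = p.1 := by rw [hqr]; exact h6
      exact Prod.ext h1 h4
    have hsub : {p, q, r} ⊆ I := by
      intro x hx
      simp only [Finset.mem_insert, Finset.mem_singleton] at hx
      rcases hx with rfl | rfl | rfl <;> assumption
    have h3 : ({p, q, r} : Finset (ℕ × ℕ)).card = 3 := by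
      rw [Finset.card_insert_of_notMem, Finset.card_insert_of_notMem, Finset.card_singleton]
      · simp [hqr]
      · simp only [Finset.mem_insert, Finset.mem_singleton]
        push_neg
        exact ⟨fun h => h5 h.symm, fun h => h7 h.symm⟩
    rw [hT, Finset.mem_coe, Finset.mem_product]
    constructor
    · rw [Finset.mem_product]
      refine ⟨hIsub hp, ?_⟩
      rw [Finset.mem_product]
      have hqm := hIsub hq
      have hrm := hIsub hr
      rw [mgrid, Finset.mem_product] at hqm hrm
      exact ⟨hqm.1, hrm.2⟩
    · rw [Finset.mem_powersetCard]
      refine ⟨(Finset.sdiff_subset).trans hIsub, ?_⟩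
      rw [Finset.card_sdiff_of_subset hsub, h3, hIcard]
  · intro I hI I' hI' heq
    rw [cornerIs, Finset.mem_coe, Finset.mem_filter] at hI hI'
    have hC := hI.2
    have hC' := hI'.2
    simp only [dif_pos hC, dif_pos hC'] at heq
    obtain ⟨hp, hq, hr, h4, h5, h6, h7⟩ := hC.choose_spec
    obtain ⟨hp', hq', hr', h4', h5', h6', h7'⟩ := hC'.choose_spec
    simp only [Prod.mk.injEq] at heq
    obtain ⟨⟨hpe, hbe, hae⟩, hRe⟩ := heq
    have hqe : hC.choose.2.1 = hC'.choose.2.1 := by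
      apply Prod.ext hbe
      rw [h4, h4', hpe]
    have hre : hC.choose.2.2 = hC'.choose.2.2 := by
      apply Prod.ext _ hae
      rw [h6, h6', hpe]
    have hsub : {hC.choose.1, hC.choose.2.1, hC.choose.2.2} ⊆ I := by
      intro x hx
      simp only [Finset.mem_insert, Finset.mem_singleton] at hx
      rcases hx with rfl | rfl | rfl <;> assumption
    have hsub' : {hC'.choose.1, hC'.choose.2.1, hC'.choose.2.2} ⊆ I' := by
      intro x hx
      simp only [Finset.mem_insert, Finset.mem_singleton] at hx
      rcases hx with rfl | rfl | rfl <;> assumption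
    have := Finset.sdiff_union_of_subset hsub
    have h2 := Finset.sdiff_union_of_subset hsub'
    rw [← this, ← h2, hRe, hpe, hqe, hre]

lemma ncard_failSet_le (n k : ℕ) (hn : 2 ≤ n) :
    Set.ncard (FailSet n k) ≤ 4 ^ k * (cornerIs n k).card := by
  classical
  set W : Finset (Finset (ℕ × ℕ) × (Finset (ℕ × ℕ) × Finset (ℕ × ℕ))) :=
    (cornerIs n k).biUnion (fun I => {I} ×ˢ (I.powerset ×ˢ I.powerset)) with hW
  have hmap : ∀ IB ∈ FailSet n k,
      (IB.1, (IB.1.filter (fun p => IB.2 p = 1), IB.1.filter (fun p => IB.2 p = -1))) ∈ W := by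
    intro IB hIB
    rw [hW, Finset.mem_biUnion]
    refine ⟨IB.1, ?_, ?_⟩
    · rw [cornerIs, Finset.mem_filter, Finset.mem_powersetCard]
      exact ⟨⟨hIB.1, hIB.2.1⟩, fail_hasCorner hn hIB⟩
    · rw [Finset.mem_product, Finset.mem_product]
      simp [Finset.filter_subset]
  have hinj : Set.InjOn
      (fun IB : Finset (ℕ × ℕ) × ((ℕ × ℕ) → ℤ) =>
        (IB.1, (IB.1.filter (fun p => IB.2 p = 1), IB.1.filter (fun p => IB.2 p = -1))))
      (FailSet n k) := by
    intro IB hIB IB' hIB' heq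
    simp only [Prod.mk.injEq] at heq
    obtain ⟨h1, h2, h3⟩ := heq
    have hBeq : IB.2 = IB'.2 := by
      funext p
      by_cases hp : p ∈ IB.1
      · have hp' : p ∈ IB'.1 := h1 ▸ hp
        have e2 := Finset.ext_iff.mp h2 p
        have e3 := Finset.ext_iff.mp h3 p
        simp only [Finset.mem_filter, hp, hp', true_and, h1] at e2 e3
        rcases hIB.2.2.1 p hp with h | h | h <;> rcases hIB'.2.2.1 p hp' with h' | h' | h' <;>
          rw [h, h'] <;> rw [h, h'] at e2 e3 <;> simp_all
      · have hp' : p ∉ IB'.1 := h1 ▸ hp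
        rw [hIB.2.2.2.1 p hp, hIB'.2.2.2.1 p hp']
    exact Prod.ext h1 hBeq
  have hcard := Set.ncard_le_ncard_of_injOn
    (t := (↑W : Set (Finset (ℕ × ℕ) × (Finset (ℕ × ℕ) × Finset (ℕ × ℕ))))) _
    (fun IB h => Finset.mem_coe.mpr (hmap IB h)) hinj W.finite_toSet
  rw [Set.ncard_coe_finset] at hcard
  refine hcard.trans ?_
  refine (Finset.card_biUnion_le).trans ?_
  rw [mul_comm]
  apply Finset.sum_le_card_nsmul
  intro I hI
  rw [cornerIs, Finset.mem_filter, Finset.mem_powersetCard] at hI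
  rw [Finset.card_product, Finset.card_product, Finset.card_singleton,
    Finset.card_powerset, hI.1.2]
  simp only [smul_eq_mul, one_mul]
  calc 2 ^ k * 2 ^ k = 4 ^ k := by rw [← pow_add, show (4:ℕ) = 2 ^ 2 from rfl, ← pow_mul]; ring_nf
    _ ≤ 4 ^ k := le_refl _

lemma cornerIs_card_le' (n k : ℕ) :
    (cornerIs n k).card ≤ Nat.choose ((n - 1) ^ 2) k := by
  have h1 : (cornerIs n k).card ≤ ((mgrid n n).powersetCard k).card :=
    Finset.card_le_card (Finset.filter_subset _ _)
  rw [Finset.card_powersetCard] at h1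
  have hm : (mgrid n n).card = (n - 1) ^ 2 := by
    rw [mgrid, Finset.card_product, Nat.card_Icc]
    simp [sq]
  rwa [hm] at h1

lemma choose_three (m j : ℕ) :
    Nat.choose m (j + 3) * ((j + 1) * (j + 2) * (j + 3)) =
      Nat.choose m j * ((m - j) * ((m - (j + 1)) * (m - (j + 2)))) := by
  have h1 := Nat.choose_succ_right_eq m j
  have h2 := Nat.choose_succ_right_eq m (j + 1)
  have h3 := Nat.choose_succ_right_eq m (j + 2)
  calc Nat.choose m (j + 3) * ((j + 1) * (j + 2) * (j + 3))
      = (Nat.choose m (j + 3) * (j + 3)) * ((j + 1) * (j + 2)) := by ring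
    _ = (Nat.choose m (j + 2) * (m - (j + 2))) * ((j + 1) * (j + 2)) := by rw [h3]
    _ = (Nat.choose m (j + 2) * (j + 2)) * ((j + 1) * (m - (j + 2))) := by ring
    _ = (Nat.choose m (j + 1) * (m - (j + 1))) * ((j + 1) * (m - (j + 2))) := by rw [h2]
    _ = (Nat.choose m (j + 1) * (j + 1)) * ((m - (j + 1)) * (m - (j + 2))) := by ring
    _ = Nat.choose m j * ((m - j) * ((m - (j + 1)) * (m - (j + 2)))) := by rw [h1]; ring

lemma nsq_bound (n k : ℕ) (hk : 3 ≤ k) (hn : 2 * k + 4 < n) :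
    n ^ 2 ≤ 2 * ((n - 1) ^ 2 - (k - 3 + 2)) := by
  obtain ⟨n', rfl⟩ : ∃ n', n = n' + 1 := ⟨n - 1, by omega⟩
  obtain ⟨k', rfl⟩ : ∃ k', k = k' + 3 := ⟨k - 3, by omega⟩
  simp only [Nat.add_sub_cancel]
  have h3n : 3 * n' ≤ n' * n' := Nat.mul_le_mul_right n' (by omega)
  have e : n' ^ 2 = n' * n' := sq n'
  have hk1 : k' + 2 ≤ n' ^ 2 := by rw [e]; nlinarith
  have h2 : 2 * (n' ^ 2 - (k' + 2)) = 2 * n' ^ 2 - 2 * (k' + 2) := by omega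
  rw [h2]
  have h3 : (n' + 1) ^ 2 + 2 * (k' + 2) ≤ 2 * n' ^ 2 := by nlinarith
  omega

lemma master (k n : ℕ) (hk : 1 ≤ k) (hn : 2 ≤ n) :
    n ^ 2 * Set.ncard (FailSet n k) ≤
      ((2 * k + 4) ^ 2 + 8 * k ^ 3) * 4 ^ k * Nat.choose ((n - 1) ^ 2) k := by
  have hF := ncard_failSet_le n k hn
  by_cases hcase : n ≤ 2 * k + 4
  · calc n ^ 2 * Set.ncard (FailSet n k)
        ≤ (2 * k + 4) ^ 2 * (4 ^ k * (cornerIs n k).card) :=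
          Nat.mul_le_mul (Nat.pow_le_pow_left hcase 2) hF
      _ ≤ (2 * k + 4) ^ 2 * (4 ^ k * Nat.choose ((n - 1) ^ 2) k) :=
          Nat.mul_le_mul_left _ (Nat.mul_le_mul_left _ (cornerIs_card_le' n k))
      _ ≤ ((2 * k + 4) ^ 2 + 8 * k ^ 3) * 4 ^ k * Nat.choose ((n - 1) ^ 2) k := by
          rw [← mul_assoc]
          exact Nat.mul_le_mul_right _ (Nat.mul_le_mul_right _ (Nat.le_add_right _ _))
  · push_neg at hcase
    by_cases hk3 : k ≤ 2
    · have hcc : (cornerIs n k).card = 0 := by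
        rw [Finset.card_eq_zero, Finset.eq_empty_iff_forall_notMem]
        intro I hI
        rw [cornerIs, Finset.mem_filter, Finset.mem_powersetCard] at hI
        have := hasCorner_card hI.2
        omega
      rw [hcc, mul_zero, Nat.le_zero] at hF
      rw [hF, mul_zero]
      exact Nat.zero_le _
    · push_neg at hk3
      have hk3' : 3 ≤ k := hk3
      set m := (n - 1) ^ 2 with hm
      set j := k - 3 with hj
      have hjk : j + 3 = k := by omega
      have hcc := cornerIs_card_le n k
      have hid := choose_three m j
      have hnm : n ^ 2 ≤ 2 * (m - (j + 2)) := nsq_bound n k hk3' hcase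
      -- chain of nat inequalities
      have step1 : n ^ 2 * Set.ncard (FailSet n k) ≤
          n ^ 2 * (4 ^ k * ((n - 1) ^ 4 * Nat.choose m j)) :=
        Nat.mul_le_mul_left _ (hF.trans (Nat.mul_le_mul_left _ hcc))
      have step2 : n ^ 2 * (4 ^ k * ((n - 1) ^ 4 * Nat.choose m j)) =
          4 ^ k * ((n ^ 2 * (n - 1) ^ 4) * Nat.choose m j) := by ring
      have hfac : n ^ 2 * (n - 1) ^ 4 ≤ (n ^ 2) ^ 3 := by
        have h1 : (n - 1) ^ 4 ≤ n ^ 4 := Nat.pow_le_pow_left (by omega) 4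
        calc n ^ 2 * (n - 1) ^ 4 ≤ n ^ 2 * n ^ 4 := Nat.mul_le_mul_left _ h1
          _ = (n ^ 2) ^ 3 := by ring
      have hcube : (n ^ 2) ^ 3 ≤ 8 * ((m - j) * ((m - (j + 1)) * (m - (j + 2)))) := by
        have h1 : m - (j + 2) ≤ m - (j + 1) := by omega
        have h2 : m - (j + 2) ≤ m - j := by omega
        calc (n ^ 2) ^ 3 ≤ (2 * (m - (j + 2))) ^ 3 := Nat.pow_le_pow_left hnm 3
          _ = 8 * ((m - (j + 2)) * ((m - (j + 2)) * (m - (j + 2)))) := by ring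
          _ ≤ 8 * ((m - j) * ((m - (j + 1)) * (m - (j + 2)))) := by
              apply Nat.mul_le_mul_left
              exact Nat.mul_le_mul h2 (Nat.mul_le_mul_right _ h1)
      have hfactorles : (j + 1) * (j + 2) * (j + 3) ≤ k ^ 3 := by
        have : j + 3 = k := hjk
        calc (j + 1) * (j + 2) * (j + 3) ≤ k * k * k := by
              apply Nat.mul_le_mul (Nat.mul_le_mul (by omega) (by omega)) (by omega)
          _ = k ^ 3 := by ring
      have step3 : (n ^ 2 * (n - 1) ^ 4) * Nat.choose m j ≤
          8 * k ^ 3 * Nat.choose m k := by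
        calc (n ^ 2 * (n - 1) ^ 4) * Nat.choose m j
            ≤ (8 * ((m - j) * ((m - (j + 1)) * (m - (j + 2))))) * Nat.choose m j :=
              Nat.mul_le_mul_right _ (hfac.trans hcube)
          _ = 8 * (Nat.choose m j * ((m - j) * ((m - (j + 1)) * (m - (j + 2))))) := by ring
          _ = 8 * (Nat.choose m (j + 3) * ((j + 1) * (j + 2) * (j + 3))) := by rw [← hid]
          _ = 8 * (Nat.choose m k * ((j + 1) * (j + 2) * (j + 3))) := by rw [hjk]
          _ ≤ 8 * (Nat.choose m k * k ^ 3) :=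
              Nat.mul_le_mul_left _ (Nat.mul_le_mul_left _ hfactorles)
          _ = 8 * k ^ 3 * Nat.choose m k := by ring
      calc n ^ 2 * Set.ncard (FailSet n k)
          ≤ 4 ^ k * ((n ^ 2 * (n - 1) ^ 4) * Nat.choose m j) := by rw [← step2]; exact step1
        _ ≤ 4 ^ k * (8 * k ^ 3 * Nat.choose m k) := Nat.mul_le_mul_left _ step3
        _ ≤ ((2 * k + 4) ^ 2 + 8 * k ^ 3) * 4 ^ k * Nat.choose m k := by
            rw [← mul_assoc, mul_comm (4 ^ k)]
            exact Nat.mul_le_mul_right _ (Nat.mul_le_mul_right _ (Nat.le_add_left _ _))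

/-- **For fixed `k` the two measures agree on almost all entry-specification events.**
For every fixed `k ≥ 1` there is a constant `C > 0` such that for all `n ≥ 2`,
`n² · |F(k,n)| ≤ C · 3^k · C((n−1)², k)`; i.e. the proportion of failing pairs among all
`3^k · C((n−1)², k)` entry-specification events with `k` specified entries is
`O(n^{−2})` as `n → ∞`. -/
theorem failures_proportion_vanishes (k : ℕ) (hk : 1 ≤ k) :
    ∃ C : ℝ, 0 < C ∧ ∀ n : ℕ, 2 ≤ n →
      ((n : ℝ) ^ 2 * Set.ncard (FailSet n k)) ≤
        C * 3 ^ k * (Nat.choose ((n - 1) ^ 2) k : ℝ) := by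
  refine ⟨(((2 * k + 4) ^ 2 + 8 * k ^ 3 : ℕ) : ℝ) * (4 / 3) ^ k, ?_, ?_⟩
  · apply mul_pos
    · exact_mod_cast Nat.pos_of_ne_zero (by positivity)
    · positivity
  · intro n hn
    have hC3 : (((2 * k + 4) ^ 2 + 8 * k ^ 3 : ℕ) : ℝ) * (4 / 3) ^ k * 3 ^ k =
        (((2 * k + 4) ^ 2 + 8 * k ^ 3 : ℕ) : ℝ) * 4 ^ k := by
      rw [mul_assoc, ← mul_pow]
      norm_num
    rw [hC3]
    have hmaster := master k n hk hn
    have hcast : ((n ^ 2 * Set.ncard (FailSet n k) : ℕ) : ℝ) ≤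
        ((((2 * k + 4) ^ 2 + 8 * k ^ 3) * 4 ^ k * Nat.choose ((n - 1) ^ 2) k : ℕ) : ℝ) := by
      exact_mod_cast hmaster
    push_cast at hcast
    calc ((n : ℝ)) ^ 2 * Set.ncard (FailSet n k)
        ≤ (((2 * k + 4) ^ 2 + 8 * k ^ 3 : ℕ) : ℝ) * 4 ^ k * Nat.choose ((n - 1) ^ 2) k := by
          push_cast
          linarith
      _ = _ := rfl
end

section
/- All balanced signings of a {0,1}-matrix have the same rank: Let m,n ≥ 1, let B : {1,…,m}×{1,…,n} → {0,1}, and let B̃ : {1,…,m}×{1,…,n} → {−1,0,+1} be a balanced signing of B, i.e. |B̃(i,j)| = B(i,j) for all (i,j) and the signed bipartite graph (X_{B̃}, σ_{B̃}) is balanced. Then rank_ℚ(B̃) = rank_ℚ(B), where the matrices are viewed over the rationals. -/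
/-- The bipartite graph `X_{B̃}` associated with a matrix `B̃`: vertex classes are the rows
(`Sum.inl i`) and the columns (`Sum.inr j`), with an edge `{rᵢ, cⱼ}` iff `B̃ i j ≠ 0`. -/
def matGraph {m n : ℕ} (Bt : Matrix (Fin m) (Fin n) ℤ) : SimpleGraph (Fin m ⊕ Fin n) where
  Adj u v := (∃ i j, Bt i j ≠ 0 ∧ u = Sum.inl i ∧ v = Sum.inr j) ∨
             (∃ i j, Bt i j ≠ 0 ∧ v = Sum.inl i ∧ u = Sum.inr j)
  symm := ⟨fun u v h => Or.symm h⟩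
  loopless := by
    constructor
    rintro u (⟨i, j, -, h1, h2⟩ | ⟨i, j, -, h1, h2⟩) <;> subst h1 <;> simp at h2

/-- The sign `σ_{B̃}` of an edge of `X_{B̃}`, read off from `B̃`. -/
def matSign {m n : ℕ} (Bt : Matrix (Fin m) (Fin n) ℤ) :
    Fin m ⊕ Fin n → Fin m ⊕ Fin n → ℤ
  | Sum.inl i, Sum.inr j => Bt i j
  | Sum.inr j, Sum.inl i => Bt i j
  | Sum.inl _, Sum.inl _ => 0
  | Sum.inr _, Sum.inr _ => 0

/-- The signed graph `(X_{B̃}, σ_{B̃})` is balanced: every cycle contains an even number of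
edges of sign `−1`. -/
def MatBalanced {m n : ℕ} (Bt : Matrix (Fin m) (Fin n) ℤ) : Prop :=
  ∀ (v : Fin m ⊕ Fin n) (w : (matGraph Bt).Walk v v), w.IsCycle →
    Even ((w.darts.filter fun d => decide (matSign Bt d.toProd.1 d.toProd.2 = -1)).length)

open SimpleGraph

namespace BalAux

lemma prod_pm_eq_pow (l : List ℤ) (h : ∀ x ∈ l, x = 1 ∨ x = -1) :
    l.prod = (-1) ^ (l.countP fun x => decide (x = -1)) := by
  induction l with
  | nil => simp
  | cons a t ih =>
    rcases h a (List.mem_cons_self) with ha | ha <;>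
      simp [List.countP_cons, ha, ih fun x hx => h x (List.mem_cons_of_mem _ hx), pow_succ,
        mul_comm]

variable {m n : ℕ} {Bt : Matrix (Fin m) (Fin n) ℤ}

/-- product of signs along a walk -/
def W {u v : Fin m ⊕ Fin n} (w : (matGraph Bt).Walk u v) : ℤ :=
  (w.darts.map fun d => matSign Bt d.toProd.1 d.toProd.2).prod

lemma matSign_symm (Bt : Matrix (Fin m) (Fin n) ℤ) (a b : Fin m ⊕ Fin n) :
    matSign Bt a b = matSign Bt b a := by
  cases a <;> cases b <;> rfl

lemma W_nil {u : Fin m ⊕ Fin n} : W (Walk.nil : (matGraph Bt).Walk u u) = 1 := rfl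

lemma W_cons {u v x : Fin m ⊕ Fin n} (h : (matGraph Bt).Adj u v) (p : (matGraph Bt).Walk v x) :
    W (Walk.cons h p) = matSign Bt u v * W p := by
  simp [W]

lemma W_append {u v x : Fin m ⊕ Fin n} (p : (matGraph Bt).Walk u v)
    (q : (matGraph Bt).Walk v x) : W (p.append q) = W p * W q := by
  simp [W]

lemma W_reverse {u v : Fin m ⊕ Fin n} (p : (matGraph Bt).Walk u v) :
    W p.reverse = W p := by
  simp only [W, Walk.darts_reverse, List.map_reverse, List.prod_reverse, List.map_map]
  congr 1
  apply List.map_congr_left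
  intro d _
  simp [Function.comp, Dart.symm, matSign_symm]

lemma W_rotate {u v : Fin m ⊕ Fin n} (c : (matGraph Bt).Walk v v) (h : u ∈ c.support) :
    W (c.rotate u h) = W c := by
  unfold W
  exact List.Perm.prod_eq (((c.rotate_darts u h).perm).map _)

section withsigns

variable (hpm : ∀ a b, (matGraph Bt).Adj a b → matSign Bt a b = 1 ∨ matSign Bt a b = -1)
include hpm

lemma W_pm {u v : Fin m ⊕ Fin n} (w : (matGraph Bt).Walk u v) : W w = 1 ∨ W w = -1 := by
  induction w with
  | nil => exact Or.inl rfl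
  | cons h p ih =>
    rw [W_cons]
    rcases hpm _ _ h with h1 | h1 <;> rcases ih with h2 | h2 <;> rw [h1, h2] <;> norm_num

lemma W_cycle (hbal : MatBalanced Bt) {v : Fin m ⊕ Fin n} (w : (matGraph Bt).Walk v v)
    (hc : w.IsCycle) : W w = 1 := by
  have hev := hbal v w hc
  rw [← List.countP_eq_length_filter] at hev
  have hall : ∀ x ∈ w.darts.map fun d => matSign Bt d.toProd.1 d.toProd.2, x = 1 ∨ x = -1 := by
    intro x hx
    obtain ⟨d, hd, rfl⟩ := List.mem_map.mp hx
    exact hpm _ _ d.adj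
  rw [W, prod_pm_eq_pow _ hall, List.countP_map]
  exact hev.neg_one_pow

omit hpm in
/-- a path ending where an adjacent edge closes it, containing that closing edge,
has length 1 -/
lemma path_len_one {u v : Fin m ⊕ Fin n} (h : (matGraph Bt).Adj v u)
    (p : (matGraph Bt).Walk u v) (hp : p.IsPath) (he : s(v, u) ∈ p.edges) :
    p.length = 1 := by
  cases p with
  | nil => simp at he
  | cons h2 q =>
    rename_i y
    rw [Walk.edges_cons, List.mem_cons] at he
    rcases he with he | he
    · rw [Sym2.eq_iff] at he
      rcases he with ⟨rfl, rfl⟩ | ⟨rfl, -⟩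
      · exact absurd rfl h.ne'
      · have hq : q.IsPath := hp.of_cons
        have : q = Walk.nil := by
          cases q with
          | nil => rfl
          | cons h3 r =>
            exfalso
            have := hq.support_nodup
            rw [Walk.support_cons, List.nodup_cons] at this
            exact this.1 (r.end_mem_support)
        subst this; rfl
    · exfalso
      have hu : u ∈ q.support := Walk.snd_mem_support_of_mem_edges q he
      rw [Walk.cons_isPath_iff] at hp
      exact hp.2 hu

lemma W_closed (hbal : MatBalanced Bt) :
    ∀ (N : ℕ) (v : Fin m ⊕ Fin n) (w : (matGraph Bt).Walk v v), w.length ≤ N → W w = 1 := by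
  intro N
  induction N with
  | zero =>
    intro v w hw
    have hd : w.darts = [] :=
      List.length_eq_zero_iff.mp (by rw [Walk.length_darts]; omega)
    simp [W, hd]
  | succ N ih =>
    intro v w hw
    rcases Nat.lt_or_ge w.length (N + 1) with hlt | hge
    · exact ih v w (by omega)
    have hlen : w.length = N + 1 := by omega
    by_cases hnd : w.support.tail.Nodup
    · -- nodup case
      cases w with
      | nil => simp [W_nil]
      | cons h p =>
        rename_i u
        have hps : p.support.Nodup := by
          rwa [Walk.support_cons, List.tail_cons] at hnd
        have hpath : p.IsPath := (Walk.isPath_def p).mpr hps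
        by_cases hedge : s(v, u) ∈ p.edges
        · -- length-2 back and forth
          have hl1 : p.length = 1 := path_len_one h p hpath hedge
          cases p with
          | nil => simp at hl1
          | cons h2 r =>
            cases r with
            | nil =>
              rw [W_cons, W_cons, W_nil, mul_one, matSign_symm Bt u v]
              rcases hpm _ _ h with h1 | h1 <;> rw [h1] <;> norm_num
            | cons h3 r' => simp [Walk.length_cons] at hl1
        · exact W_cycle hpm hbal _ ((Walk.cons_isCycle_iff p h).mpr ⟨hpath, hedge⟩)
    · -- duplicate vertex: rotate and split
      obtain ⟨x, hxdup⟩ := List.exists_duplicate_iff_not_nodup.mpr hnd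
      have hxmem : x ∈ w.support := List.mem_of_mem_tail hxdup.mem
      set w' := w.rotate x hxmem with hw'
      have hWrot : W w' = W w := W_rotate w hxmem
      have hdup' : List.Duplicate x w'.support.tail := by
        rw [List.duplicate_iff_two_le_count] at hxdup ⊢
        rw [hw']
        convert hxdup using 1
        convert (w.support_rotate x hxmem).perm.count_eq x
        all_goals
          have key : ∀ x y : BEq (Fin m ⊕ Fin n), x.beq = y.beq → x = y := by
            rintro ⟨⟩ ⟨⟩ h; cases h; rfl
          apply key
          funext a b
          cases a <;> cases b <;> simp [BEq.beq] <;> rfl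
      have hlen' : w'.length = w.length := by
        rw [← Walk.length_darts, ← Walk.length_darts]
        exact (w.rotate_darts x hxmem).perm.length_eq
      cases hww' : w' with
      | nil => rw [hww'] at hlen'; simp at hlen'; omega
      | cons h p =>
        rename_i y
        rw [hww'] at hdup' hlen' hWrot
        rw [Walk.support_cons, List.tail_cons] at hdup'
        have hxp : x ∈ p.support := hdup'.mem
        set q := p.takeUntil x hxp with hq
        set r := p.dropUntil x hxp with hr
        have hspec : q.append r = p := p.take_spec hxp
        have hcq := p.count_support_takeUntil_eq_one hxp
        rw [← hq] at hcq
        have hsupp : p.support = q.support ++ r.support.tail := by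
          rw [← hspec, Walk.support_append]
        rw [hsupp, List.duplicate_iff_sublist, List.sublist_append_iff] at hdup'
        have hrmem : x ∈ r.support.tail := by
          obtain ⟨a, b, hab, ha, hb⟩ := hdup'
          match a, hab, ha with
          | [], hab, ha =>
            exact hb.subset (by rw [List.nil_append] at hab; rw [← hab]; exact List.mem_cons_self)
          | [x'], hab, ha =>
            have hb' : b = [x] := by
              simp only [List.cons_append, List.nil_append] at hab
              exact ((List.cons_eq_cons.mp hab).2).symm
            exact hb.subset (by rw [hb']; exact List.mem_cons_self)
          | x' :: x'' :: a'', hab, ha =>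
            exfalso
            have h2 := hab
            simp only [List.cons_append] at h2
            obtain ⟨h3, h4⟩ := List.cons_eq_cons.mp h2
            obtain ⟨h5, h6⟩ := List.cons_eq_cons.mp h4
            obtain ⟨h7, h8⟩ := List.append_eq_nil_iff.mp h6.symm
            have hsub : List.Sublist [x, x] q.support := by
              rw [← h3, ← h5, h7] at ha
              exact ha
            have h2c := List.duplicate_iff_two_le_count.mp (List.duplicate_iff_sublist.mpr hsub)
            omega
        have hrlen : 1 ≤ r.length := by
          have h1 : 0 < r.support.tail.length := List.length_pos_iff.mpr (List.ne_nil_of_mem hrmem)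
          have h2 : r.support.length = r.length + 1 := r.length_support
          have h3 : r.support.tail.length = r.support.length - 1 := List.length_tail
          omega
        have hlensum : q.length + 1 + r.length = N + 1 := by
          have hql : q.length + r.length = p.length := by
            rw [← hspec, Walk.length_append]
          have hcl := Walk.length_cons h p
          omega
        have hW1 : W (Walk.cons h q) = 1 := ih x (Walk.cons h q) (by rw [Walk.length_cons]; omega)
        have hW2 : W r = 1 := ih x r (by omega)
        rw [← hWrot, ← hspec, ← Walk.cons_append, W_append, hW1, hW2, mul_one]

end withsigns

end BalAux

/-- **All balanced signings of a `{0,1}`-matrix have the same rank.** If `B` is a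
`{0,1}`-matrix, `B̃` a signing of it (`|B̃ i j| = B i j` for all `i, j`, so `B̃` takes values
in `{−1,0,+1}`) whose associated signed bipartite graph is balanced, then
`rank_ℚ(B̃) = rank_ℚ(B)`. -/
theorem balanced_signing_rank (m n : ℕ) (hm : 1 ≤ m) (hn : 1 ≤ n)
    (B : Matrix (Fin m) (Fin n) ℤ) (hB : ∀ i j, B i j = 0 ∨ B i j = 1)
    (Bt : Matrix (Fin m) (Fin n) ℤ) (habs : ∀ i j, |Bt i j| = B i j)
    (hbal : MatBalanced Bt) :
    (Bt.map (Int.cast : ℤ → ℚ)).rank = (B.map (Int.cast : ℤ → ℚ)).rank := by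
  classical
  open BalAux in
  -- signs of edges are ±1
  have hpm : ∀ a b, (matGraph Bt).Adj a b → matSign Bt a b = 1 ∨ matSign Bt a b = -1 := by
    rintro a b (⟨i, j, hne, rfl, rfl⟩ | ⟨i, j, hne, rfl, rfl⟩) <;>
    · show Bt i j = 1 ∨ Bt i j = -1
      rcases hB i j with h0 | h1
      · exact absurd (abs_eq_zero.mp ((habs i j).trans h0)) hne
      · exact (abs_eq (by norm_num : (0:ℤ) ≤ 1)).mp ((habs i j).trans h1)
  have hW1 : ∀ (v : Fin m ⊕ Fin n) (w : (matGraph Bt).Walk v v), W w = 1 := fun v w =>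
    W_closed hpm hbal w.length v w le_rfl
  -- switching function
  obtain ⟨s, hs1, hs2⟩ : ∃ s : (Fin m ⊕ Fin n) → ℤ, (∀ v, s v = 1 ∨ s v = -1) ∧
      ∀ a b, (matGraph Bt).Adj a b → matSign Bt a b = s a * s b := by
    set G := matGraph Bt with hG
    have hreach : ∀ v : Fin m ⊕ Fin n, G.Reachable (G.connectedComponentMk v).out v := by
      intro v
      exact ConnectedComponent.exact (Quot.out_eq _)
    refine ⟨fun v => W (hreach v).some, fun v => W_pm hpm _, ?_⟩
    intro a b hadj
    show matSign Bt a b = W (hreach a).some * W (hreach b).some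
    have hroot : (G.connectedComponentMk a).out = (G.connectedComponentMk b).out :=
      congrArg Quot.out (ConnectedComponent.connectedComponentMk_eq_of_adj hadj)
    obtain ⟨q, hqW⟩ : ∃ q' : G.Walk (G.connectedComponentMk a).out b,
        W q' = W (hreach b).some := by
      rw [hroot]
      exact ⟨(hreach b).some, rfl⟩
    have hclosed : W (((hreach a).some).append (Walk.cons hadj q.reverse)) = 1 := hW1 _ _
    rw [W_append, W_cons, W_reverse, hqW] at hclosed
    have h1 := W_pm hpm (hreach a).some
    have h2 := W_pm hpm (hreach b).some
    rcases h1 with h1 | h1 <;> rcases h2 with h2 | h2 <;>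
      rw [h1, h2] at hclosed ⊢ <;> linarith
  -- diagonal matrices
  set dr : Fin m → ℚ := fun i => ((s (Sum.inl i) : ℤ) : ℚ) with hdr
  set dc : Fin n → ℚ := fun j => ((s (Sum.inr j) : ℤ) : ℚ) with hdc
  have hfact : Bt.map (Int.cast : ℤ → ℚ) =
      Matrix.diagonal dr * (B.map (Int.cast : ℤ → ℚ) * Matrix.diagonal dc) := by
    ext i j
    rw [Matrix.diagonal_mul, Matrix.mul_diagonal]
    simp only [Matrix.map_apply, hdr, hdc]
    rcases hB i j with h0 | h1
    · have : Bt i j = 0 := abs_eq_zero.mp ((habs i j).trans h0)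
      rw [this, h0]
      push_cast
      ring
    · have hne : Bt i j ≠ 0 := by
        intro hc
        have h2 := habs i j
        rw [hc, h1] at h2
        simp at h2
      have hadj : (matGraph Bt).Adj (Sum.inl i) (Sum.inr j) := Or.inl ⟨i, j, hne, rfl, rfl⟩
      have hsij : Bt i j = s (Sum.inl i) * s (Sum.inr j) := hs2 _ _ hadj
      rw [hsij, h1]
      push_cast
      ring
  have hdet1 : IsUnit (Matrix.diagonal dr).det := by
    rw [Matrix.det_diagonal]
    refine isUnit_iff_ne_zero.mpr (Finset.prod_ne_zero_iff.mpr fun i _ => ?_)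
    rcases hs1 (Sum.inl i) with h | h <;> simp [hdr, h]
  have hdet2 : IsUnit (Matrix.diagonal dc).det := by
    rw [Matrix.det_diagonal]
    refine isUnit_iff_ne_zero.mpr (Finset.prod_ne_zero_iff.mpr fun j _ => ?_)
    rcases hs1 (Sum.inr j) with h | h <;> simp [hdc, h]
  rw [hfact, Matrix.rank_mul_eq_right_of_isUnit_det _ _ hdet1,
    Matrix.rank_mul_eq_left_of_isUnit_det _ _ hdet2]
end
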